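/- Let Ω be a Polish space and let 𝒫 be a nonempty set of Borel probability measures on Ω that is compact in the topology of weak convergence of measures. Let X : Ω → ℝ be a Borel measurable, quasi-continuous function with inf_{P∈𝒫} P({X < 0}) > 0. Then there exists δ > 0 such that sup_{P∈𝒫} P({X ≥ −δ}) < 1. -/

import Mathlib

open MeasureTheory Set
open scoped NNReal Topology ENNReal

lemma aux_isOpen_lt_measure_open {Ω : Type*} [TopologicalSpace Ω] [PolishSpace Ω]
    [MeasurableSpace Ω] [BorelSpace Ω] {G : Set Ω} (hG : IsOpen G) (c : ℝ≥0) :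
    IsOpen {P : ProbabilityMeasure Ω | c < P G} := by
  letI := TopologicalSpace.upgradeIsCompletelyMetrizable Ω
  rw [isOpen_iff_mem_nhds]
  intro P hP
  have h := ProbabilityMeasure.le_liminf_measure_open_of_tendsto
    (μs := (id : ProbabilityMeasure Ω → ProbabilityMeasure Ω)) (L := 𝓝 P) Filter.tendsto_id hG
  have hlt : (c : ℝ≥0∞) < Filter.liminf (fun Q : ProbabilityMeasure Ω => (Q : Measure Ω) G) (𝓝 P) := by
    refine lt_of_lt_of_le ?_ h
    rw [← ProbabilityMeasure.ennreal_coeFn_eq_coeFn_toMeasure]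
    exact_mod_cast hP
  have hev := Filter.eventually_lt_of_lt_liminf hlt
  filter_upwards [hev] with Q hQ
  rw [← ProbabilityMeasure.ennreal_coeFn_eq_coeFn_toMeasure] at hQ
  exact_mod_cast hQ

/-- **Key intermediate step in the proof of Theorem 3.1.**
Let `Ω` be a Polish space and `𝔓` a nonempty weakly compact set of Borel probability measures
on `Ω`.  If `X : Ω → ℝ` is Borel measurable, quasi-continuous, and
`inf_{P ∈ 𝔓} P(X < 0) > 0`, then there is `δ > 0` with `sup_{P ∈ 𝔓} P(X ≥ -δ) < 1`. -/
theorem exists_delta_capacity_lt_one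
    {Ω : Type*} [TopologicalSpace Ω] [PolishSpace Ω] [MeasurableSpace Ω] [BorelSpace Ω]
    (𝔓 : Set (ProbabilityMeasure Ω)) (h𝔓ne : 𝔓.Nonempty) (h𝔓cpt : IsCompact 𝔓)
    (X : Ω → ℝ) (hXmeas : Measurable X)
    (hqc : ∀ ε : ℝ≥0, 0 < ε → ∃ O : Set Ω, IsOpen O ∧
      (⨆ P : 𝔓, (P : ProbabilityMeasure Ω) O) < ε ∧ ContinuousOn X Oᶜ)
    (hinf : 0 < ⨅ P : 𝔓, (P : ProbabilityMeasure Ω) {ω | X ω < 0}) :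
    ∃ δ : ℝ, 0 < δ ∧ (⨆ P : 𝔓, (P : ProbabilityMeasure Ω) {ω | -δ ≤ X ω}) < 1 := by
  haveI : Nonempty 𝔓 := h𝔓ne.to_subtype
  set c : ℝ≥0 := ⨅ P : 𝔓, (P : ProbabilityMeasure Ω) {ω | X ω < 0} with hc
  have hcpos : 0 < c := hinf
  have hcle : ∀ P ∈ 𝔓, c ≤ (P : ProbabilityMeasure Ω) {ω | X ω < 0} := fun P hP =>
    ciInf_le (OrderBot.bddBelow _) (⟨P, hP⟩ : 𝔓)
  obtain ⟨O, hOopen, hOsmall, hXcont⟩ := hqc (c / 4) (by positivity)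
  have hO : ∀ P ∈ 𝔓, (P : ProbabilityMeasure Ω) O < c / 4 := by
    intro P hP
    refine lt_of_le_of_lt ?_ hOsmall
    exact le_ciSup (f := fun P : 𝔓 => (P : ProbabilityMeasure Ω) O)
      ⟨1, forall_mem_range.2 fun _ => ProbabilityMeasure.apply_le_one _ _⟩ ⟨P, hP⟩
  -- choose relatively open pieces
  choose V hVopen hVeq using fun n : ℕ =>
    continuousOn_iff'.mp hXcont (Iio (-(1 / (n + 1 : ℝ)))) isOpen_Iio
  set G : ℕ → Set Ω := fun n => (⋃ k ∈ Finset.range (n + 1), V k) ∪ O with hG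
  have hGopen : ∀ n, IsOpen (G n) := fun n =>
    (isOpen_biUnion fun k _ => hVopen k).union hOopen
  have hGmono : Monotone G := by
    intro a b hab
    apply union_subset_union_left
    apply iUnion₂_subset
    intro k hk
    exact subset_iUnion₂ (s := fun k _ => V k) k
      (Finset.mem_range.2 (lt_of_lt_of_le (Finset.mem_range.1 hk) (by omega)))
  have hsub : {ω | X ω < 0} ⊆ ⋃ n, G n := by
    intro ω hω
    by_cases hωO : ω ∈ O
    · exact mem_iUnion.2 ⟨0, Or.inr hωO⟩
    · have hω' : X ω < 0 := hω
      obtain ⟨n, hn⟩ := exists_nat_one_div_lt (neg_pos.2 hω')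
      have hmem : ω ∈ X ⁻¹' Iio (-(1 / (n + 1 : ℝ))) ∩ Oᶜ := by
        constructor
        · simp only [mem_preimage, mem_Iio]; linarith
        · exact hωO
      rw [hVeq n] at hmem
      exact mem_iUnion.2 ⟨n, Or.inl (mem_biUnion (Finset.self_mem_range_succ n) hmem.1)⟩
  -- each P puts mass > c/2 on some G n
  have hhalf : c / 2 < c := NNReal.half_lt_self (ne_of_gt hcpos)
  have hcov : ∀ P ∈ 𝔓, ∃ n, c / 2 < (P : ProbabilityMeasure Ω) (G n) := by
    intro P hP
    have h1 : (c : ℝ≥0∞) ≤ (P : Measure Ω) (⋃ n, G n) := by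
      refine le_trans ?_ (measure_mono hsub)
      rw [← ProbabilityMeasure.ennreal_coeFn_eq_coeFn_toMeasure]
      exact_mod_cast hcle P hP
    rw [hGmono.directed_le.measure_iUnion] at h1
    have h2 : ((c / 2 : ℝ≥0) : ℝ≥0∞) < ⨆ n, (P : Measure Ω) (G n) :=
      lt_of_lt_of_le (by exact_mod_cast hhalf) h1
    obtain ⟨n, hn⟩ := lt_iSup_iff.mp h2
    rw [← ProbabilityMeasure.ennreal_coeFn_eq_coeFn_toMeasure] at hn
    exact ⟨n, by exact_mod_cast hn⟩
  -- finite subcover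
  set U : ℕ → Set (ProbabilityMeasure Ω) :=
    fun n => {Q : ProbabilityMeasure Ω | c / 2 < Q (G n)} with hU
  have hUopen : ∀ n, IsOpen (U n) := fun n => aux_isOpen_lt_measure_open (hGopen n) _
  have hUcov : 𝔓 ⊆ ⋃ n, U n := by
    intro P hP
    obtain ⟨n, hn⟩ := hcov P hP
    exact mem_iUnion.2 ⟨n, hn⟩
  obtain ⟨t, ht⟩ := h𝔓cpt.elim_finite_subcover U hUopen hUcov
  set N : ℕ := t.sup id with hN
  have hkey : ∀ P ∈ 𝔓, c / 2 < (P : ProbabilityMeasure Ω) (G N) := by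
    intro P hP
    obtain ⟨n, hnt, hn⟩ := mem_iUnion₂.mp (ht hP)
    exact lt_of_lt_of_le hn (ProbabilityMeasure.apply_mono P (hGmono (Finset.le_sup (f := id) hnt)))
  refine ⟨1 / (N + 1 : ℝ), by positivity, ?_⟩
  set δ : ℝ := 1 / (N + 1 : ℝ) with hδ
  have hGNsub : G N ∩ Oᶜ ⊆ {ω | X ω < -δ} := by
    rintro ω ⟨hω1, hω2⟩
    rcases hω1 with hω1 | hω1
    · obtain ⟨k, hk, hωk⟩ := mem_iUnion₂.mp hω1
      have : ω ∈ X ⁻¹' Iio (-(1 / (k + 1 : ℝ))) ∩ Oᶜ := by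
        rw [hVeq k]; exact ⟨hωk, hω2⟩
      have hXω : X ω < -(1 / (k + 1 : ℝ)) := this.1
      have hkN : (k : ℝ) ≤ N := by exact_mod_cast Nat.lt_succ_iff.mp (Finset.mem_range.1 hk)
      have : (1 / (N + 1 : ℝ)) ≤ 1 / (k + 1 : ℝ) := by
        apply one_div_le_one_div_of_le <;> linarith
      simp only [mem_setOf_eq]; linarith
    · exact absurd hω1 hω2
  have hc4top : ((c / 4 : ℝ≥0) : ℝ≥0∞) ≠ ⊤ := ENNReal.coe_ne_top
  have hbound : ∀ P ∈ 𝔓, (P : ProbabilityMeasure Ω) {ω | -δ ≤ X ω} ≤ 1 - c / 4 := by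
    intro P hP
    set m : Measure Ω := (P : Measure Ω) with hm
    have hmeas : MeasurableSet {ω | X ω < -δ} := hXmeas measurableSet_Iio
    have hA : ((c / 4 : ℝ≥0) : ℝ≥0∞) < m {ω | X ω < -δ} := by
      have h1 : ((c / 2 : ℝ≥0) : ℝ≥0∞) < m (G N) := by
        rw [← ProbabilityMeasure.ennreal_coeFn_eq_coeFn_toMeasure]
        exact_mod_cast hkey P hP
      have h2 : m (G N) ≤ m {ω | X ω < -δ} + m O := by
        calc m (G N) ≤ m ((G N ∩ Oᶜ) ∪ O) := by
              apply measure_mono; intro ω hω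
              by_cases h : ω ∈ O
              · exact Or.inr h
              · exact Or.inl ⟨hω, h⟩
          _ ≤ m (G N ∩ Oᶜ) + m O := measure_union_le _ _
          _ ≤ m {ω | X ω < -δ} + m O := add_le_add_left (measure_mono hGNsub) _
      have h3 : m O ≤ ((c / 4 : ℝ≥0) : ℝ≥0∞) := by
        rw [← ProbabilityMeasure.ennreal_coeFn_eq_coeFn_toMeasure]
        exact_mod_cast (hO P hP).le
      have h4 : ((c / 2 : ℝ≥0) : ℝ≥0∞) < m {ω | X ω < -δ} + ((c / 4 : ℝ≥0) : ℝ≥0∞) :=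
        lt_of_lt_of_le h1 (le_trans h2 (by gcongr))
      have heq : ((c / 2 : ℝ≥0) : ℝ≥0∞) = ((c / 4 : ℝ≥0) : ℝ≥0∞) + ((c / 4 : ℝ≥0) : ℝ≥0∞) := by
        rw [← ENNReal.coe_add]
        congr 1
        rw [← NNReal.coe_inj]
        push_cast
        ring
      rw [heq] at h4
      exact (ENNReal.add_lt_add_iff_right hc4top).mp h4
    have hcompl : m {ω | -δ ≤ X ω} = 1 - m {ω | X ω < -δ} := by
      have hset : {ω | -δ ≤ X ω} = {ω | X ω < -δ}ᶜ := by
        ext ω; simp [not_lt]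
      rw [hset, prob_compl_eq_one_sub hmeas]
    have : ((P : ProbabilityMeasure Ω) {ω | -δ ≤ X ω} : ℝ≥0∞) ≤ ((1 - c / 4 : ℝ≥0) : ℝ≥0∞) := by
      rw [ProbabilityMeasure.ennreal_coeFn_eq_coeFn_toMeasure, hcompl, ENNReal.coe_sub]
      push_cast
      exact tsub_le_tsub_left (by have := hA.le; push_cast at this; exact this) 1
    exact_mod_cast this
  have hc41 : c / 4 ≤ 1 := by
    refine le_trans ?_ (ProbabilityMeasure.apply_le_one (h𝔓ne.choose : ProbabilityMeasure Ω)
      {ω | X ω < 0})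
    calc c / 4 ≤ c := by
          rw [div_le_iff₀ (by norm_num)]
          calc c = c * 1 := (mul_one c).symm
            _ ≤ c * 4 := by gcongr; norm_num
      _ ≤ _ := hcle _ h𝔓ne.choose_spec
  refine lt_of_le_of_lt (ciSup_le fun P => hbound P P.2) ?_
  exact tsub_lt_self one_pos (by positivity)
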